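/- Let q : Fin 4 × Fin 4 → ℝ be nonnegative with total sum 1 in the strong surrogate type model, with ACE, γ, and observed functionals defined as usual. Then ACE satisfies the upper bounds U₄ = γ + P(Y=1,S=0|T=0) + 2·P(Y=0,S=1|T=0) and U₅ = γ + P(Y=0,S=1|T=0) + P(S=0|T=1): that is, ACE ≤ min(U₄, U₅). -/
import Mathlib

/- Strong-surrogate potential-outcome-type model: `q (i, j)` is the proportion of the
type with `(S_{T=0}, S_{T=1})` given by the binary expansion of `i` and
`(Y_{S=0}, Y_{S=1})` given by the binary expansion of `j`. -/

/-- `P(Y=0, S=0 | T=0)` -/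
noncomputable def pA (q : Fin 4 × Fin 4 → ℝ) : ℝ := q (0, 0) + q (0, 1) + q (1, 0) + q (1, 1)

/-- `P(Y=1, S=0 | T=0)` -/
noncomputable def pB (q : Fin 4 × Fin 4 → ℝ) : ℝ := q (0, 2) + q (0, 3) + q (1, 2) + q (1, 3)

/-- `P(Y=0, S=1 | T=0)` -/
noncomputable def pC (q : Fin 4 × Fin 4 → ℝ) : ℝ := q (2, 0) + q (2, 2) + q (3, 0) + q (3, 2)

/-- `P(Y=1, S=1 | T=0)` -/
noncomputable def pD (q : Fin 4 × Fin 4 → ℝ) : ℝ := q (2, 1) + q (2, 3) + q (3, 1) + q (3, 3)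

/-- `P(S=0 | T=1)` -/
noncomputable def pE (q : Fin 4 × Fin 4 → ℝ) : ℝ :=
  q (0, 0) + q (0, 1) + q (0, 2) + q (0, 3) + q (2, 0) + q (2, 1) + q (2, 2) + q (2, 3)

/-- `γ = ACE(S → Y)` -/
noncomputable def gam (q : Fin 4 × Fin 4 → ℝ) : ℝ :=
  (q (0, 1) + q (1, 1) + q (2, 1) + q (3, 1)) - (q (0, 2) + q (1, 2) + q (2, 2) + q (3, 2))

/-- `ACE(T → Y)` -/
noncomputable def ace (q : Fin 4 × Fin 4 → ℝ) : ℝ := q (2, 2) + q (1, 1) - q (1, 2) - q (2, 1)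

theorem stmt15 (q : Fin 4 × Fin 4 → ℝ) (hq : ∀ p, 0 ≤ q p)
    (hsum : ∑ p : Fin 4 × Fin 4, q p = 1) :
    ace q ≤ min (gam q + pB q + 2 * pC q) (gam q + pC q + pE q) := by
  have h := fun i j => hq (i, j)
  simp only [ace, gam, pB, pC, pE, le_min_iff]
  constructor <;>
  nlinarith [h 0 0, h 0 1, h 0 2, h 0 3, h 1 0, h 1 1, h 1 2, h 1 3,
    h 2 0, h 2 1, h 2 2, h 2 3, h 3 0, h 3 1, h 3 2, h 3 3]
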